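/- arXiv:1003.5681 — 3 statements merged into one kernel-verified Lean document; each statement's English description precedes it below -/
import Mathlib

section
/- Let (L,v) be a valued field and K a dense subfield. If A ⊆ K is an additive complement of the valuation ring of (K,v), then A is also an additive complement of the valuation ring of (L,v). -/
/-- `K` is dense in `(L,v)`: for every `a ∈ L` and every value `v c` (`c ≠ 0`),
there is `b ∈ K` with `v (a - b) ≤ v c`. -/
def Valuation.DenseSubfield {L : Type*} [Field L] {Γ₀ : Type*}
    [LinearOrderedCommGroupWithZero Γ₀] (v : Valuation L Γ₀) (K : Subfield L) : Prop :=
  ∀ a c : L, c ≠ 0 → ∃ b ∈ K, v (a - b) ≤ v c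

/-- If `K` is a dense subfield of `(L,v)` and `A ⊆ K` is an additive complement of
the valuation ring of `(K,v)` (i.e. `A` meets `{v ≤ 1}` only in `0` and every
element of `K` is congruent to an element of `A` modulo the valuation ring),
then `A` is also an additive complement of the valuation ring of `(L,v)`. -/
theorem additive_complement_of_dense {L : Type*} [Field L] {Γ₀ : Type*}
    [LinearOrderedCommGroupWithZero Γ₀] (v : Valuation L Γ₀) (K : Subfield L)
    (hd : v.DenseSubfield K) (A : AddSubgroup L) (hAK : (A : Set L) ⊆ K)
    (hA₁ : ∀ x ∈ A, v x ≤ 1 → x = 0)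
    (hA₂ : ∀ b ∈ K, ∃ x ∈ A, v (b - x) ≤ 1) :
    (∀ x ∈ A, v x ≤ 1 → x = 0) ∧ (∀ a : L, ∃ x ∈ A, v (a - x) ≤ 1) := by
  refine ⟨hA₁, fun a => ?_⟩
  obtain ⟨b, hbK, hab⟩ := hd a 1 one_ne_zero
  obtain ⟨x, hxA, hbx⟩ := hA₂ b hbK
  refine ⟨x, hxA, ?_⟩
  have : a - x = (a - b) + (b - x) := by ring
  rw [this]
  calc v ((a - b) + (b - x)) ≤ max (v (a - b)) (v (b - x)) := v.map_add _ _
    _ ≤ 1 := max_le (hab.trans_eq v.map_one) hbx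
end

section
/- Let R be a weak complement in a valued field (K,v) and Γ a convex subgroup of the value group vK. Then R_Γ := {r ∈ R : v(r) ∈ Γ ∪ {∞}} is a subring of K, and its quotient field K_Γ satisfies v(K_Γ) = Γ. -/
variable {Γ₀ : Type*} [LinearOrderedCommGroupWithZero Γ₀]

/-- The value group `vK` of a valuation on a field `K`, as a subgroup of `Γ₀ˣ`. -/
def Valuation.valueGroup {K : Type*} [Field K] (v : Valuation K Γ₀) : Subgroup Γ₀ˣ where
  carrier := {γ : Γ₀ˣ | ∃ a : K, v a = (γ : Γ₀)}
  one_mem' := ⟨1, map_one v⟩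
  mul_mem' := by
    rintro γ δ ⟨a, ha⟩ ⟨b, hb⟩
    exact ⟨a * b, by rw [map_mul, ha, hb]; norm_cast⟩
  inv_mem' := by
    rintro γ ⟨a, ha⟩
    exact ⟨a⁻¹, by rw [map_inv₀, ha]; norm_cast⟩

/-- A subgroup of `Γ₀ˣ` is convex if with any element it contains everything
between it and its inverse. -/
def Subgroup.IsConvex (Γ : Subgroup Γ₀ˣ) : Prop :=
  ∀ γ ∈ Γ, ∀ δ : Γ₀ˣ, 1 ≤ δ → δ ≤ γ → δ ∈ Γ

/-- Let `R` be a weak complement in a valued field `(K,v)` (every nonzero `r ∈ R`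
has additive value `≤ 0`, i.e. `1 ≤ v r` multiplicatively, and every `a ∈ K` is
within the valuation ring of some `r ∈ R`), and let `Γ` be a convex subgroup of the
value group `vK`.  Then `R_Γ = {r ∈ R : v r ∈ Γ ∪ {∞}}` is a subring of `K`, and its
quotient field `K_Γ` satisfies `v(K_Γ) = Γ`. -/
theorem weak_complement_piece_subring_and_valueGroup {K : Type*} [Field K]
    (v : Valuation K Γ₀) (R : Subring K)
    (hw₁ : ∀ r ∈ R, r ≠ 0 → 1 ≤ v r)
    (hw₂ : ∀ a : K, ∃ r ∈ R, v (a - r) ≤ 1)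
    (Γ : Subgroup Γ₀ˣ) (hconv : Γ.IsConvex) (hΓ : Γ ≤ v.valueGroup) :
    ∃ S : Subring K,
      (S : Set K) = {r : K | r ∈ R ∧ (r = 0 ∨ ∃ γ ∈ Γ, v r = (γ : Γ₀))} ∧
      (∀ x ∈ Subfield.closure (S : Set K), x ≠ 0 → ∃ γ ∈ Γ, v x = (γ : Γ₀)) ∧
      (∀ γ ∈ Γ, ∃ x ∈ Subfield.closure (S : Set K), v x = (γ : Γ₀)) := by
  classical
  have unit_val : ∀ x : K, x ≠ 0 → v x ≠ 0 := fun x hx => by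
    simpa [Valuation.zero_iff] using hx
  set S : Subring K :=
    { carrier := {r : K | r ∈ R ∧ (r = 0 ∨ ∃ γ ∈ Γ, v r = (γ : Γ₀))}
      one_mem' := ⟨R.one_mem, Or.inr ⟨1, Γ.one_mem, map_one v⟩⟩
      zero_mem' := ⟨R.zero_mem, Or.inl rfl⟩
      mul_mem' := by
        rintro a b ⟨ha, hva⟩ ⟨hb, hvb⟩
        refine ⟨R.mul_mem ha hb, ?_⟩
        rcases hva with rfl | ⟨γ, hγ, hvγ⟩
        · exact Or.inl (by simp)
        rcases hvb with rfl | ⟨δ, hδ, hvδ⟩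
        · exact Or.inl (by simp)
        · exact Or.inr ⟨γ * δ, Γ.mul_mem hγ hδ, by rw [map_mul, hvγ, hvδ]; norm_cast⟩
      add_mem' := by
        rintro a b ⟨ha, hva⟩ ⟨hb, hvb⟩
        refine ⟨R.add_mem ha hb, ?_⟩
        by_cases hab : a + b = 0
        · exact Or.inl hab
        rcases hva with rfl | ⟨γ, hγ, hvγ⟩
        · rw [zero_add] at hab ⊢
          exact Or.inr (hvb.resolve_left hab)
        rcases hvb with rfl | ⟨δ, hδ, hvδ⟩
        · rw [add_zero] at hab ⊢
          exact Or.inr ⟨γ, hγ, hvγ⟩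
        set ε : Γ₀ˣ := Units.mk0 (v (a + b)) (unit_val _ hab) with hε
        have hεv : (ε : Γ₀) = v (a + b) := rfl
        have h1 : (1 : Γ₀ˣ) ≤ ε := by
          have := hw₁ (a + b) (R.add_mem ha hb) hab
          rw [← Units.val_le_val, hεv, Units.val_one]
          exact this
        refine Or.inr ⟨ε, ?_, rfl⟩
        have hle := v.map_add a b
        rcases le_max_iff.mp hle with h | h
        · refine hconv γ hγ ε h1 ?_
          rw [← Units.val_le_val, hεv]
          rw [hvγ] at h; exact h
        · refine hconv δ hδ ε h1 ?_
          rw [← Units.val_le_val, hεv]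
          rw [hvδ] at h; exact h
      neg_mem' := by
        rintro a ⟨ha, hva⟩
        refine ⟨R.neg_mem ha, ?_⟩
        rcases hva with rfl | ⟨γ, hγ, hvγ⟩
        · exact Or.inl neg_zero
        · exact Or.inr ⟨γ, hγ, by rwa [v.map_neg]⟩ } with hS
  refine ⟨S, rfl, ?_, ?_⟩
  · intro x hx hx0
    have frac : x = 0 ∨ ∃ r ∈ S, ∃ s ∈ S, s ≠ 0 ∧ x = r / s := by
      refine Subfield.closure_induction
        (p := fun y _ => y = 0 ∨ ∃ r ∈ S, ∃ s ∈ S, s ≠ 0 ∧ y = r / s)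
        ?_ ?_ ?_ ?_ ?_ ?_ hx
      · intro y hy
        exact Or.inr ⟨y, hy, 1, S.one_mem, one_ne_zero, (div_one y).symm⟩
      · exact Or.inr ⟨1, S.one_mem, 1, S.one_mem, one_ne_zero, (div_one 1).symm⟩
      · rintro a b _ _ pa pb
        rcases pa with rfl | ⟨r, hr, s, hs, hs0, rfl⟩
        · rw [zero_add]; exact pb
        rcases pb with rfl | ⟨r', hr', s', hs', hs0', rfl⟩
        · rw [add_zero]; exact Or.inr ⟨r, hr, s, hs, hs0, rfl⟩
        refine Or.inr ⟨r * s' + r' * s,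
          S.add_mem (S.mul_mem hr hs') (S.mul_mem hr' hs),
          s * s', S.mul_mem hs hs', mul_ne_zero hs0 hs0', ?_⟩
        field_simp
      · rintro a _ pa
        rcases pa with rfl | ⟨r, hr, s, hs, hs0, rfl⟩
        · exact Or.inl neg_zero
        · exact Or.inr ⟨-r, S.neg_mem hr, s, hs, hs0, by rw [neg_div]⟩
      · rintro a _ pa
        rcases pa with rfl | ⟨r, hr, s, hs, hs0, rfl⟩
        · exact Or.inl inv_zero
        by_cases hr0 : r = 0
        · subst hr0; exact Or.inl (by simp)
        · exact Or.inr ⟨s, hs, r, hr, hr0, by rw [inv_div]⟩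
      · rintro a b _ _ pa pb
        rcases pa with rfl | ⟨r, hr, s, hs, hs0, rfl⟩
        · rw [zero_mul]; exact Or.inl rfl
        rcases pb with rfl | ⟨r', hr', s', hs', hs0', rfl⟩
        · rw [mul_zero]; exact Or.inl rfl
        exact Or.inr ⟨r * r', S.mul_mem hr hr', s * s', S.mul_mem hs hs',
          mul_ne_zero hs0 hs0', div_mul_div_comm r s r' s'⟩
    rcases frac with rfl | ⟨r, hr, s, hs, hs0, rfl⟩
    · exact absurd rfl hx0
    have hr0 : r ≠ 0 := fun h => hx0 (by rw [h, zero_div])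
    obtain ⟨-, hrv⟩ := hr
    obtain ⟨-, hsv⟩ := hs
    obtain ⟨γ₁, hγ₁, e₁⟩ := hrv.resolve_left hr0
    obtain ⟨γ₂, hγ₂, e₂⟩ := hsv.resolve_left hs0
    refine ⟨γ₁ / γ₂, div_mem hγ₁ hγ₂, ?_⟩
    rw [map_div₀, e₁, e₂]
    norm_cast
  · have main : ∀ γ : Γ₀ˣ, γ ∈ Γ → 1 ≤ γ →
        ∃ x ∈ Subfield.closure (S : Set K), v x = (γ : Γ₀) := by
      intro γ hγ h1
      obtain ⟨a, hva⟩ := hΓ hγ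
      rcases eq_or_lt_of_le h1 with heq | hlt
      · exact ⟨1, Subfield.one_mem _, by rw [map_one, ← heq]; rfl⟩
      have hlt' : (1 : Γ₀) < v a := by
        rw [hva]; exact_mod_cast hlt
      obtain ⟨r, hrR, hr1⟩ := hw₂ a
      have hsub : v (a - r) < v a := lt_of_le_of_lt hr1 hlt'
      have hvr : v r = v a := by
        have := Valuation.map_sub_eq_of_lt_right v hsub
        rw [show a - r - a = -r by ring, v.map_neg] at this
        exact this
      have hrS : r ∈ S := ⟨hrR, Or.inr ⟨γ, hγ, by rw [hvr, hva]⟩⟩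
      exact ⟨r, Subfield.subset_closure hrS, by rw [hvr, hva]⟩
    intro γ hγ
    rcases le_total 1 γ with h | h
    · exact main γ hγ h
    · obtain ⟨x, hxcl, hxv⟩ := main γ⁻¹ (Γ.inv_mem hγ) (one_le_inv'.mpr h)
      refine ⟨x⁻¹, Subfield.inv_mem _ hxcl, ?_⟩
      rw [map_inv₀, hxv]
      norm_cast
end

section
/- Let R be a weak complement in a valued field (K,v) and Γ a non-trivial convex subgroup of vK, with associated coarsening v_Γ (whose value group is vK/Γ) and induced valuation v̄_Γ on the residue field Kv_Γ. Then the image of the field K_Γ = Quot(R_Γ) under the residue map of v_Γ is dense in (Kv_Γ, v̄_Γ). -/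
variable {Γ₀ : Type*} [LinearOrderedCommGroupWithZero Γ₀]

-- Lemma A: for γ ∈ Γ with 1 < γ, there is r ∈ S with v r = γ.
lemma lemA {K : Type*} [Field K] (v : Valuation K Γ₀) (R : Subring K)
    (hw₂ : ∀ a : K, ∃ r ∈ R, v (a - r) ≤ 1)
    (Γ : Subgroup Γ₀ˣ) (hΓ : Γ ≤ v.valueGroup)
    {γ : Γ₀ˣ} (hγ : γ ∈ Γ) (h1 : (1 : Γ₀) < γ) :
    ∃ r : K, (r ∈ R ∧ (r = 0 ∨ ∃ γ' ∈ Γ, v r = (γ' : Γ₀))) ∧ v r = (γ : Γ₀) := by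
  obtain ⟨c, hc⟩ := hΓ hγ
  obtain ⟨r, hrR, hr⟩ := hw₂ c
  have hlt : v (c - r) < v c := by rw [hc]; exact lt_of_le_of_lt hr h1
  have hvr : v r = (γ : Γ₀) := by
    have : v (c - (c - r)) = v c := Valuation.map_sub_eq_of_lt_left _ hlt
    simpa [hc] using this
  exact ⟨r, ⟨hrR, Or.inr ⟨γ, hγ, hvr⟩⟩, hvr⟩

-- Lemma B: for any γ ∈ Γ there is b in the subfield closure with v b = γ.
lemma lemB {K : Type*} [Field K] (v : Valuation K Γ₀) (R : Subring K)
    (hw₂ : ∀ a : K, ∃ r ∈ R, v (a - r) ≤ 1)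
    (Γ : Subgroup Γ₀ˣ) (hΓ : Γ ≤ v.valueGroup) (hne : Γ ≠ ⊥)
    {γ : Γ₀ˣ} (hγ : γ ∈ Γ) :
    ∃ b ∈ Subfield.closure {r : K | r ∈ R ∧ (r = 0 ∨ ∃ γ' ∈ Γ, v r = (γ' : Γ₀))},
      v b = (γ : Γ₀) := by
  obtain ⟨ε, hεΓ, hε1⟩ : ∃ ε ∈ Γ, ε ≠ 1 := by
    by_contra h
    push_neg at h
    exact hne (Subgroup.eq_bot_iff_forall _ |>.2 h)
  have hεinv : ε⁻¹ ∈ Γ := Γ.inv_mem hεΓ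
  set η : Γ₀ˣ := max ε ε⁻¹ with hηdef
  have hηΓ : η ∈ Γ := by
    rcases max_cases ε ε⁻¹ with ⟨h, _⟩ | ⟨h, _⟩ <;> rw [hηdef, h] <;> assumption
  have hη1 : 1 < η := by
    rcases lt_trichotomy ε 1 with h | h | h
    · exact lt_max_of_lt_right (one_lt_inv_of_inv h)
    · exact absurd h hε1
    · exact lt_max_of_lt_left h
  set m : Γ₀ˣ := max γ⁻¹ 1 with hmdef
  have hmΓ : m ∈ Γ := by
    rcases max_cases γ⁻¹ (1:Γ₀ˣ) with ⟨h, _⟩ | ⟨h, _⟩ <;> rw [hmdef, h]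
    · exact Γ.inv_mem hγ
    · exact Γ.one_mem
  set μ : Γ₀ˣ := m * η with hμdef
  have hμΓ : μ ∈ Γ := Γ.mul_mem hmΓ hηΓ
  have hm1 : (1:Γ₀ˣ) ≤ m := le_max_right _ _
  have hμ1 : 1 < μ := by
    calc (1:Γ₀ˣ) < η := hη1
    _ = 1 * η := (one_mul η).symm
    _ ≤ m * η := mul_le_mul_left hm1 η
  have hγμ1 : 1 < γ * μ := by
    calc (1:Γ₀ˣ) < η := hη1
    _ = γ * (γ⁻¹ * η) := by group
    _ ≤ γ * (m * η) := by
        exact mul_le_mul_right (mul_le_mul_left (le_max_left _ _) η) γ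
  have hγμΓ : γ * μ ∈ Γ := Γ.mul_mem hγ hμΓ
  obtain ⟨r₁, hr₁S, hr₁v⟩ := lemA v R hw₂ Γ hΓ hγμΓ (by exact_mod_cast hγμ1)
  obtain ⟨r₂, hr₂S, hr₂v⟩ := lemA v R hw₂ Γ hΓ hμΓ (by exact_mod_cast hμ1)
  have hr₂0 : r₂ ≠ 0 := by
    intro h; rw [h, map_zero] at hr₂v; exact (Units.ne_zero μ) hr₂v.symm
  refine ⟨r₁ / r₂, Subfield.div_mem _ (Subfield.subset_closure hr₁S)
    (Subfield.subset_closure hr₂S), ?_⟩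
  rw [map_div₀, hr₁v, hr₂v]
  push_cast
  field_simp

/-- Let `R` be a weak complement in a valued field `(K,v)` and `Γ` a non-trivial
convex subgroup of `vK`, with associated coarsening `v_Γ` and induced valuation
`v̄_Γ` on the residue field `Kv_Γ`.  Then the image of `K_Γ = Quot(R_Γ)` under the
residue map of `v_Γ` is dense in `(Kv_Γ, v̄_Γ)`.  Unravelled upstairs: for every `a`
in the valuation ring of `v_Γ` (i.e. `v a ≤ γ₀` for some `γ₀ ∈ Γ`) and every
`δ ∈ Γ`, there is `b ∈ K_Γ` whose residue is `δ`-close to that of `a`, i.e.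
`v (a - b) ≤ δ` (additively `v(a - b) ≥ δ`). -/
theorem weak_complement_piece_dense_in_residue_field {K : Type*} [Field K]
    (v : Valuation K Γ₀) (R : Subring K)
    (hw₁ : ∀ r ∈ R, r ≠ 0 → 1 ≤ v r)
    (hw₂ : ∀ a : K, ∃ r ∈ R, v (a - r) ≤ 1)
    (Γ : Subgroup Γ₀ˣ) (hconv : Γ.IsConvex) (hΓ : Γ ≤ v.valueGroup) (hne : Γ ≠ ⊥) :
    ∀ a : K, (∃ γ₀ ∈ Γ, v a ≤ (γ₀ : Γ₀)) → ∀ δ ∈ Γ,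
      ∃ b ∈ Subfield.closure {r : K | r ∈ R ∧ (r = 0 ∨ ∃ γ ∈ Γ, v r = (γ : Γ₀))},
        v (a - b) ≤ (δ : Γ₀) := by
  rintro a ⟨γ₀, hγ₀Γ, hva⟩ δ hδΓ
  set γ : Γ₀ˣ := min δ γ₀ with hγdef
  have hγΓ : γ ∈ Γ := by
    rcases min_cases δ γ₀ with ⟨h, _⟩ | ⟨h, _⟩ <;> rw [hγdef, h] <;> assumption
  have hγδ : γ ≤ δ := min_le_left _ _
  have hγγ₀ : γ ≤ γ₀ := min_le_right _ _
  obtain ⟨c, hcmem, hcv⟩ := lemB v R hw₂ Γ hΓ hne hγΓ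
  have hc0 : c ≠ 0 := by
    intro h; rw [h, map_zero] at hcv; exact (Units.ne_zero γ) hcv.symm
  obtain ⟨r, hrR, hrv⟩ := hw₂ (a / c)
  -- show r is in the generating set
  have hrS : r ∈ {r : K | r ∈ R ∧ (r = 0 ∨ ∃ γ' ∈ Γ, v r = (γ' : Γ₀))} := by
    refine ⟨hrR, ?_⟩
    rcases eq_or_ne r 0 with h | h
    · exact Or.inl h
    · right
      have h1r : (1 : Γ₀) ≤ v r := hw₁ r hrR h
      have hvac : v (a / c) ≤ (γ₀ : Γ₀) * (γ : Γ₀)⁻¹ := by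
        rw [map_div₀, hcv, div_eq_mul_inv]
        exact mul_le_mul_left hva _
      have hub : v r ≤ (γ₀ : Γ₀) * (γ : Γ₀)⁻¹ := by
        have : v r = v (a / c - (a / c - r)) := by ring_nf
        rw [this]
        refine le_trans (v.map_sub _ _) (max_le hvac (le_trans hrv ?_))
        have h1 : (1 : Γ₀ˣ) ≤ γ₀ * γ⁻¹ := by
          rw [← div_eq_mul_inv]; exact one_le_div'.mpr hγγ₀
        exact_mod_cast h1
      -- v r is a unit
      have hvr0 : v r ≠ 0 := by
        simpa using (Valuation.ne_zero_iff v).2 h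
      set u : Γ₀ˣ := Units.mk0 (v r) hvr0 with hu
      have huΓ : u ∈ Γ := by
        refine hconv (γ₀ * γ⁻¹) (Γ.mul_mem hγ₀Γ (Γ.inv_mem hγΓ)) u ?_ ?_
        · exact_mod_cast h1r
        · exact_mod_cast hub
      exact ⟨u, huΓ, rfl⟩
  refine ⟨r * c, Subfield.mul_mem _ (Subfield.subset_closure hrS) hcmem, ?_⟩
  have key : a - r * c = c * (a / c - r) := by field_simp
  rw [key, map_mul, hcv]
  calc (γ : Γ₀) * v (a / c - r) ≤ (γ : Γ₀) * 1 := mul_le_mul_right hrv _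
  _ = (γ : Γ₀) := mul_one _
  _ ≤ (δ : Γ₀) := by exact_mod_cast hγδ
end
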